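/- Let n ≥ 1 and let λ, π₁, π₂ be real numbers with 0 < 2λ < π₁ and 0 < 2λ < π₂, and set ψᵢ = arcosh(πᵢ/(2λ)) > 0 for i = 1,2. For i = 1,2, let Zᵢ be the n×n tridiagonal Toeplitz matrix with diagonal entries πᵢ, first off-diagonal entries λ, and zeros elsewhere, and let P = Z₁ Z₂. Then P is invertible, and the entries of P⁻¹ exhibit exponential (log-linear in absolute value) off-diagonal decay at rate min(ψ₁,ψ₂): for all 1 ≤ r, t ≤ n, |(P⁻¹)_{rt}| ≤ C · (|t−r| + 1 + 2·exp(−(ψ₁+ψ₂))/(1 − exp(−(ψ₁+ψ₂)))) · exp(−min(ψ₁,ψ₂)·|t−r|), where C = 1 / (4λ² · sinh(ψ₁) · sinh(ψ₂) · (1 − exp(−2ψ₁(n+1))) · (1 − exp(−2ψ₂(n+1)))). -/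

import Mathlib

open Matrix Real

/-- The inverse hyperbolic cosine: arcosh x = log (x + sqrt (x^2 - 1)). -/
noncomputable def arcosh (x : ℝ) : ℝ := Real.log (x + Real.sqrt (x ^ 2 - 1))

section Aux

open Finset

lemma arcosh_facts' (x : ℝ) (hx : 1 < x) :
    0 < _root_.arcosh x ∧ Real.cosh (_root_.arcosh x) = x := by
  unfold _root_.arcosh
  have hs : 0 < Real.sqrt (x^2-1) := Real.sqrt_pos.2 (by nlinarith)
  have hs2 : Real.sqrt (x^2-1) ^ 2 = x^2 - 1 := Real.sq_sqrt (by nlinarith)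
  have hpos : (1:ℝ) < x + Real.sqrt (x^2-1) := by nlinarith
  constructor
  · exact Real.log_pos hpos
  rw [Real.cosh_eq, Real.exp_log (by linarith), Real.exp_neg, Real.exp_log (by linarith)]
  have hinv : (x + Real.sqrt (x^2-1))⁻¹ = x - Real.sqrt (x^2-1) :=
    inv_eq_of_mul_eq_one_right (by nlinarith)
  rw [hinv]; ring

noncomputable def uu (ψ : ℝ) (a : ℤ) : ℝ := (-1:ℝ)^a * Real.sinh (((a:ℝ)+1)*ψ)
noncomputable def vv (n : ℕ) (ψ : ℝ) (a : ℤ) : ℝ := (-1:ℝ)^a * Real.sinh (((n:ℝ)-(a:ℝ))*ψ)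
noncomputable def Mt (n : ℕ) (lam ψ : ℝ) (i j : ℤ) : ℝ :=
  uu ψ (min i j) * vv n ψ (max i j) / (lam * Real.sinh ψ * Real.sinh (((n:ℝ)+1)*ψ))

lemma neg_one_zpow_sub_one (a : ℤ) : ((-1:ℝ))^(a-1) = -(-1:ℝ)^a := by
  rw [zpow_sub₀ (by norm_num : (-1:ℝ) ≠ 0), zpow_one]
  field_simp

lemma neg_one_zpow_add_one (a : ℤ) : ((-1:ℝ))^(a+1) = -(-1:ℝ)^a := by
  rw [zpow_add₀ (by norm_num : (-1:ℝ) ≠ 0), zpow_one]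
  ring

lemma neg_one_zpow_sq (a : ℤ) : ((-1:ℝ))^a * ((-1:ℝ))^a = 1 := by
  rw [← mul_zpow]; norm_num

lemma abs_neg_one_zpow' (a : ℤ) : |(-1:ℝ)^a| = 1 := by
  rcases Int.even_or_odd a with h | h
  · rw [h.neg_one_zpow]; norm_num
  · rw [Odd.neg_one_zpow h]; norm_num

lemma rec_u (lam ψ : ℝ) (a : ℤ) :
    lam * uu ψ (a-1) + (2*lam*Real.cosh ψ) * uu ψ a + lam * uu ψ (a+1) = 0 := by
  have key : Real.sinh ((a:ℝ)*ψ) + Real.sinh (((a:ℝ)+2)*ψ)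
      = 2 * Real.cosh ψ * Real.sinh (((a:ℝ)+1)*ψ) := by
    rw [show ((a:ℝ))*ψ = ((a:ℝ)+1)*ψ - ψ by ring,
        show ((a:ℝ)+2)*ψ = ((a:ℝ)+1)*ψ + ψ by ring, Real.sinh_add, Real.sinh_sub]
    ring
  simp only [uu, neg_one_zpow_sub_one, neg_one_zpow_add_one]
  push_cast
  rw [show ((a:ℝ)-1+1) = (a:ℝ) by ring, show ((a:ℝ)+1+1) = (a:ℝ)+2 by ring]
  linear_combination (-(lam * (-1:ℝ)^a)) * key

lemma rec_v (n : ℕ) (lam ψ : ℝ) (a : ℤ) :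
    lam * vv n ψ (a-1) + (2*lam*Real.cosh ψ) * vv n ψ a + lam * vv n ψ (a+1) = 0 := by
  have key : Real.sinh (((n:ℝ)-(a:ℝ)+1)*ψ) + Real.sinh (((n:ℝ)-(a:ℝ)-1)*ψ)
      = 2 * Real.cosh ψ * Real.sinh (((n:ℝ)-(a:ℝ))*ψ) := by
    rw [show ((n:ℝ)-(a:ℝ)+1)*ψ = ((n:ℝ)-(a:ℝ))*ψ + ψ by ring,
        show ((n:ℝ)-(a:ℝ)-1)*ψ = ((n:ℝ)-(a:ℝ))*ψ - ψ by ring, Real.sinh_add, Real.sinh_sub]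
    ring
  simp only [vv, neg_one_zpow_sub_one, neg_one_zpow_add_one]
  push_cast
  rw [show ((n:ℝ)-((a:ℝ)-1)) = (n:ℝ)-(a:ℝ)+1 by ring,
      show ((n:ℝ)-((a:ℝ)+1)) = (n:ℝ)-(a:ℝ)-1 by ring]
  linear_combination (-(lam * (-1:ℝ)^a)) * key

lemma sinh_prod (x y p : ℝ) :
    Real.sinh (x+2*p) * Real.sinh (y-x) - Real.sinh (x+p) * Real.sinh (y-x-p)
      = Real.sinh p * Real.sinh (y+p) := by
  have h2 : (2:ℝ)*p = p + p := by ring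
  simp only [Real.sinh_eq, h2, ← add_assoc, Real.exp_add, Real.exp_sub, Real.exp_neg]
  have ha := Real.exp_ne_zero x
  have hb := Real.exp_ne_zero y
  have hc := Real.exp_ne_zero p
  field_simp
  ring

lemma wronsk (n : ℕ) (lam ψ : ℝ) (i : ℤ) :
    lam * (uu ψ i * vv n ψ (i+1) - uu ψ (i+1) * vv n ψ i)
      = lam * Real.sinh ψ * Real.sinh (((n:ℝ)+1)*ψ) := by
  have key := sinh_prod ((i:ℝ)*ψ) ((n:ℝ)*ψ) ψ
  rw [show (n:ℝ)*ψ-(i:ℝ)*ψ-ψ = ((n:ℝ)-(i:ℝ)-1)*ψ by ring,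
      show (i:ℝ)*ψ+2*ψ = ((i:ℝ)+2)*ψ by ring, show (n:ℝ)*ψ-(i:ℝ)*ψ = ((n:ℝ)-(i:ℝ))*ψ by ring,
      show (i:ℝ)*ψ+ψ = ((i:ℝ)+1)*ψ by ring,
      show (n:ℝ)*ψ+ψ = ((n:ℝ)+1)*ψ by ring] at key
  simp only [uu, vv, neg_one_zpow_add_one]
  push_cast
  rw [show ((n:ℝ)-((i:ℝ)+1)) = (n:ℝ)-(i:ℝ)-1 by ring,
      show ((i:ℝ)+1+1) = (i:ℝ)+2 by ring]
  have sq := neg_one_zpow_sq i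
  linear_combination lam * key + lam * (Real.sinh (((i:ℝ)+2)*ψ) * Real.sinh (((n:ℝ)-(i:ℝ))*ψ)
    - Real.sinh (((i:ℝ)+1)*ψ) * Real.sinh (((n:ℝ)-(i:ℝ)-1)*ψ)) * sq

lemma Mt_symm (n : ℕ) (lam ψ : ℝ) (i j : ℤ) : Mt n lam ψ i j = Mt n lam ψ j i := by
  simp [Mt, min_comm, max_comm]

lemma D_pos (n : ℕ) (lam ψ : ℝ) (hlam : 0 < lam) (hψ : 0 < ψ) :
    0 < lam * Real.sinh ψ * Real.sinh (((n:ℝ)+1)*ψ) := by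
  have h1 : 0 < Real.sinh ψ := Real.sinh_pos_iff.2 hψ
  have h2 : 0 < Real.sinh (((n:ℝ)+1)*ψ) := by
    apply Real.sinh_pos_iff.2; positivity
  positivity

lemma main_id (n : ℕ) (lam ψ : ℝ) (hlam : 0 < lam) (hψ : 0 < ψ) (i j : ℤ)
    (hj0 : 0 ≤ j) (hjn : j < (n:ℤ)) :
    lam * Mt n lam ψ (i-1) j + (2*lam*Real.cosh ψ) * Mt n lam ψ i j
      + lam * Mt n lam ψ (i+1) j = if i = j then 1 else 0 := by
  have hD := D_pos n lam ψ hlam hψ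
  have hDne : lam * Real.sinh ψ * Real.sinh (((n:ℝ)+1)*ψ) ≠ 0 := ne_of_gt hD
  rcases lt_trichotomy i j with h | h | h
  · rw [if_neg (ne_of_lt h)]
    simp only [Mt, min_eq_left (by omega : i - 1 ≤ j), max_eq_right (by omega : i - 1 ≤ j),
      min_eq_left (le_of_lt h), max_eq_right (le_of_lt h),
      min_eq_left (by omega : i + 1 ≤ j), max_eq_right (by omega : i + 1 ≤ j)]
    linear_combination (vv n ψ j / (lam * Real.sinh ψ * Real.sinh (((n:ℝ)+1)*ψ))) * rec_u lam ψ i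
  · subst h
    rw [if_pos rfl]
    simp only [Mt, min_eq_left (by omega : i - 1 ≤ i), max_eq_right (by omega : i - 1 ≤ i),
      min_self, max_self, min_eq_left (by omega : i ≤ i + 1), max_eq_right (by omega : i ≤ i + 1)]
    rw [min_eq_right (by omega : i ≤ i + 1), max_eq_left (by omega : i ≤ i + 1)]
    have h1 : (1:ℝ) = (lam * Real.sinh ψ * Real.sinh (((n:ℝ)+1)*ψ)) / (lam * Real.sinh ψ * Real.sinh (((n:ℝ)+1)*ψ)) := (div_self hDne).symm
    linear_combination (vv n ψ i / (lam * Real.sinh ψ * Real.sinh (((n:ℝ)+1)*ψ))) * rec_u lam ψ i + (1 / (lam * Real.sinh ψ * Real.sinh (((n:ℝ)+1)*ψ))) * wronsk n lam ψ i - h1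
  · rw [if_neg (ne_of_gt h)]
    simp only [Mt, min_eq_right (by omega : j ≤ i - 1), max_eq_left (by omega : j ≤ i - 1),
      min_eq_right (le_of_lt h), max_eq_left (le_of_lt h),
      min_eq_right (by omega : j ≤ i + 1), max_eq_left (by omega : j ≤ i + 1)]
    linear_combination (uu ψ j / (lam * Real.sinh ψ * Real.sinh (((n:ℝ)+1)*ψ))) * rec_v n lam ψ i

lemma Mt_left_zero (n : ℕ) (lam ψ : ℝ) (j : ℤ) (hj : -1 ≤ j) :
    Mt n lam ψ (-1) j = 0 := by
  rw [Mt, min_eq_left hj, uu]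
  push_cast
  norm_num

lemma Mt_right_zero (n : ℕ) (lam ψ : ℝ) (j : ℤ) (hj : j ≤ (n:ℤ)) :
    Mt n lam ψ (n:ℤ) j = 0 := by
  rw [Mt, max_eq_left hj, vv]
  push_cast
  norm_num

lemma sinh_big (n : ℕ) (ψ : ℝ) :
    Real.sinh (((n:ℝ)+1)*ψ) =
      Real.exp (((n:ℝ)+1)*ψ) * (1 - Real.exp (-2*ψ*((n:ℝ)+1))) / 2 := by
  have h : Real.exp (-2*ψ*((n:ℝ)+1)) =
      Real.exp (-(((n:ℝ)+1)*ψ)) * Real.exp (-(((n:ℝ)+1)*ψ)) := by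
    rw [← Real.exp_add]; ring_nf
  rw [Real.sinh_eq, h, Real.exp_neg]
  have := Real.exp_ne_zero (((n:ℝ)+1)*ψ)
  field_simp

lemma one_sub_exp_pos (n : ℕ) (ψ : ℝ) (hψ : 0 < ψ) :
    0 < 1 - Real.exp (-2*ψ*((n:ℝ)+1)) := by
  have : Real.exp (-2*ψ*((n:ℝ)+1)) < 1 := by
    apply Real.exp_lt_one_iff.2; nlinarith [Nat.cast_nonneg (α := ℝ) n]
  linarith

lemma Mt_bound (n : ℕ) (lam ψ : ℝ) (hlam : 0 < lam) (hψ : 0 < ψ) (i j : ℕ)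
    (hin : i < n) (hjn : j < n) :
    |Mt n lam ψ (i:ℤ) (j:ℤ)| ≤
      Real.exp (-ψ * |(i:ℝ) - (j:ℝ)|) /
        (2*lam*Real.sinh ψ*(1 - Real.exp (-2*ψ*((n:ℝ)+1)))) := by
  have hσ : 0 < Real.sinh ψ := Real.sinh_pos_iff.2 hψ
  have hE : Real.exp (-2*ψ*((n:ℝ)+1)) < 1 := by
    have := one_sub_exp_pos n ψ hψ; linarith
  set E := Real.exp (-2*ψ*((n:ℝ)+1)) with hEdef
  have hB : 0 < 2*lam*Real.sinh ψ*(1 - E) := by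
    have h1 : 0 < 1 - E := by linarith
    positivity
  set a : ℤ := min (i:ℤ) (j:ℤ) with ha
  set b : ℤ := max (i:ℤ) (j:ℤ) with hb
  have ha0 : 0 ≤ a := le_min (Int.ofNat_nonneg i) (Int.ofNat_nonneg j)
  have hbn : b < (n:ℤ) := max_lt (by exact_mod_cast hin) (by exact_mod_cast hjn)
  have habs : |(i:ℝ) - (j:ℝ)| = ((b:ℝ) - (a:ℝ)) := by
    rcases le_total i j with h | h
    · have h' : (i:ℤ) ≤ (j:ℤ) := by exact_mod_cast h
      have h'' : (i:ℝ) ≤ (j:ℝ) := by exact_mod_cast h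
      rw [ha, hb, min_eq_left h', max_eq_right h', abs_of_nonpos (by linarith)]
      push_cast; ring
    · have h' : (j:ℤ) ≤ (i:ℤ) := by exact_mod_cast h
      have h'' : (j:ℝ) ≤ (i:ℝ) := by exact_mod_cast h
      rw [ha, hb, min_eq_right h', max_eq_left h', abs_of_nonneg (by linarith)]
      push_cast; ring
  have hD : 0 < lam * Real.sinh ψ * Real.sinh (((n:ℝ)+1)*ψ) := D_pos n lam ψ hlam hψ
  have hu : |uu ψ a| = Real.sinh (((a:ℝ)+1)*ψ) := by
    rw [uu, abs_mul, abs_neg_one_zpow', one_mul, abs_of_nonneg]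
    apply Real.sinh_nonneg_iff.2
    have : (0:ℝ) ≤ (a:ℝ) := by exact_mod_cast ha0
    positivity
  have hv : |vv n ψ b| = Real.sinh (((n:ℝ)-(b:ℝ))*ψ) := by
    rw [vv, abs_mul, abs_neg_one_zpow', one_mul, abs_of_nonneg]
    apply Real.sinh_nonneg_iff.2
    have : (b:ℝ) ≤ (n:ℝ) := by exact_mod_cast le_of_lt hbn
    nlinarith
  have hMt : |Mt n lam ψ (i:ℤ) (j:ℤ)|
      = Real.sinh (((a:ℝ)+1)*ψ) * Real.sinh (((n:ℝ)-(b:ℝ))*ψ)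
        / (lam * Real.sinh ψ * Real.sinh (((n:ℝ)+1)*ψ)) := by
    rw [Mt, abs_div, abs_mul, hu, hv, abs_of_pos hD]
  rw [hMt, habs, div_le_div_iff₀ hD hB]
  have hs1 : Real.sinh (((a:ℝ)+1)*ψ) ≤ Real.exp (((a:ℝ)+1)*ψ)/2 := by
    rw [Real.sinh_eq]
    have := Real.exp_pos (-(((a:ℝ)+1)*ψ))
    linarith
  have hs2 : Real.sinh (((n:ℝ)-(b:ℝ))*ψ) ≤ Real.exp (((n:ℝ)-(b:ℝ))*ψ)/2 := by
    rw [Real.sinh_eq]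
    have := Real.exp_pos (-(((n:ℝ)-(b:ℝ))*ψ))
    linarith
  have hs1' : 0 ≤ Real.sinh (((a:ℝ)+1)*ψ) := by rw [← hu]; exact abs_nonneg _
  have hs2' : 0 ≤ Real.sinh (((n:ℝ)-(b:ℝ))*ψ) := by rw [← hv]; exact abs_nonneg _
  have key : Real.exp (((a:ℝ)+1)*ψ) * Real.exp (((n:ℝ)-(b:ℝ))*ψ)
      = Real.exp (-ψ*((b:ℝ)-(a:ℝ))) * Real.exp (((n:ℝ)+1)*ψ) := by
    rw [← Real.exp_add, ← Real.exp_add]; ring_nf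
  rw [sinh_big]
  have e1 : 0 < Real.exp (((a:ℝ)+1)*ψ) := Real.exp_pos _
  have e2 : 0 < Real.exp (((n:ℝ)-(b:ℝ))*ψ) := Real.exp_pos _
  have e3 : 0 < Real.exp (-ψ*((b:ℝ)-(a:ℝ))) := Real.exp_pos _
  have e4 : 0 < Real.exp (((n:ℝ)+1)*ψ) := Real.exp_pos _
  nlinarith [mul_le_mul hs1 hs2 hs2' (by positivity), mul_pos hlam hσ,
    mul_nonneg (mul_nonneg (le_of_lt hlam) (le_of_lt hσ)) (le_of_lt (sub_pos.2 hE))]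

lemma row_sum (n : ℕ) (p lam : ℝ) (f : ℤ → ℝ) (hfm : f (-1) = 0) (hfn : f (n:ℤ) = 0)
    (i : ℕ) (hi : i < n) :
    ∑ k ∈ Finset.range n,
      (if i = k then p else if ((i:ℤ)-(k:ℤ)).natAbs = 1 then lam else 0) * f (k:ℤ)
      = lam * f ((i:ℤ)-1) + p * f (i:ℤ) + lam * f ((i:ℤ)+1) := by
  have hterm : ∀ k ∈ Finset.range n,
      (if i = k then p else if ((i:ℤ)-(k:ℤ)).natAbs = 1 then lam else 0) * f (k:ℤ)
      = (if k = i then p * f (k:ℤ) else 0) + ((if k + 1 = i then lam * f (k:ℤ) else 0)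
          + (if k = i + 1 then lam * f (k:ℤ) else 0)) := by
    intro k _
    split_ifs <;> first | (exfalso; omega) | ring
  rw [Finset.sum_congr rfl hterm, Finset.sum_add_distrib, Finset.sum_add_distrib]
  have hS1 : ∑ k ∈ Finset.range n, (if k = i then p * f (k:ℤ) else 0) = p * f (i:ℤ) := by
    rw [Finset.sum_ite_eq' (Finset.range n) i (fun k => p * f (k:ℤ)),
      if_pos (Finset.mem_range.2 hi)]
  have hS2 : ∑ k ∈ Finset.range n, (if k + 1 = i then lam * f (k:ℤ) else 0)
      = lam * f ((i:ℤ)-1) := by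
    rcases Nat.eq_zero_or_pos i with h0 | h0
    · subst h0
      rw [Finset.sum_eq_zero (fun k _ => by rw [if_neg (by omega)])]
      simp [hfm]
    · obtain ⟨m, rfl⟩ : ∃ m, i = m + 1 := ⟨i - 1, by omega⟩
      have : ∀ k ∈ Finset.range n, (if k + 1 = m + 1 then lam * f (k:ℤ) else 0)
          = (if k = m then lam * f (k:ℤ) else 0) := by
        intro k _; congr 1; simp
      rw [Finset.sum_congr rfl this,
        Finset.sum_ite_eq' (Finset.range n) m (fun k => lam * f (k:ℤ)),
        if_pos (Finset.mem_range.2 (by omega))]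
      congr 1
      push_cast; ring
  have hS3 : ∑ k ∈ Finset.range n, (if k = i + 1 then lam * f (k:ℤ) else 0)
      = lam * f ((i:ℤ)+1) := by
    rw [Finset.sum_ite_eq' (Finset.range n) (i+1) (fun k => lam * f (k:ℤ))]
    rcases lt_or_ge (i+1) n with h | h
    · rw [if_pos (Finset.mem_range.2 h)]; push_cast; ring_nf
    · have : i + 1 = n := by omega
      rw [if_neg (by simp [Finset.mem_range]; omega),
        show ((i:ℤ)+1) = ((n:ℕ):ℤ) by omega, hfn]
      ring
  rw [hS1, hS2, hS3]
  ring

lemma geom_tail (q : ℝ) (hq0 : 0 < q) (hq1 : q < 1) (a : ℕ) :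
    ∑ j ∈ Finset.range a, q^(j+1) ≤ q / (1-q) := by
  have h1q : 0 < 1 - q := by linarith
  have hgs : ∑ j ∈ Finset.range a, q^j = (1 - q^a)/(1-q) := by
    rw [geom_sum_eq (by linarith : q ≠ 1)]
    rw [show q - 1 = -(1-q) by ring, show q^a - 1 = -(1 - q^a) by ring, neg_div_neg_eq]
  have : ∑ j ∈ Finset.range a, q^(j+1) = q * ∑ j ∈ Finset.range a, q^j := by
    rw [Finset.mul_sum]
    exact Finset.sum_congr rfl (fun j _ => by ring)
  rw [this, hgs, show q * ((1 - q^a)/(1-q)) = (q*(1-q^a))/(1-q) by ring,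
    div_le_div_iff₀ h1q h1q]
  have h : 0 ≤ q^a := le_of_lt (pow_pos hq0 a)
  nlinarith [mul_nonneg (mul_nonneg (le_of_lt hq0) (le_of_lt h1q)) h]

lemma conv_bound (n : ℕ) (ψ₁ ψ₂ : ℝ) (h1 : 0 < ψ₁) (h2 : 0 < ψ₂) (r t : ℕ)
    (hr : r < n) (ht : t < n) :
    ∑ k ∈ Finset.range n, Real.exp (-ψ₂ * |(r:ℝ)-(k:ℝ)|) * Real.exp (-ψ₁ * |(k:ℝ)-(t:ℝ)|)
      ≤ (|(t:ℝ)-(r:ℝ)| + 1 + 2 * Real.exp (-(ψ₁+ψ₂)) / (1 - Real.exp (-(ψ₁+ψ₂))))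
        * Real.exp (-(min ψ₁ ψ₂) * |(t:ℝ)-(r:ℝ)|) := by
  set q := Real.exp (-(ψ₁+ψ₂)) with hqdef
  have hq0 : 0 < q := Real.exp_pos _
  have hq1 : q < 1 := Real.exp_lt_one_iff.2 (by linarith)
  set m := min ψ₁ ψ₂ with hmdef
  have hm1 : m ≤ ψ₁ := min_le_left _ _
  have hm2 : m ≤ ψ₂ := min_le_right _ _
  have hm0 : 0 < m := lt_min h1 h2
  set a := min r t with hadef
  set b := max r t with hbdef
  have hab : a ≤ b := min_le_max
  have har : a ≤ r := min_le_left _ _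
  have hat : a ≤ t := min_le_right _ _
  have hrb : r ≤ b := le_max_left _ _
  have htb : t ≤ b := le_max_right _ _
  have habsum : a + b = r + t := min_add_max r t
  have hbn : b < n := max_lt hr ht
  have hdabs : |(t:ℝ)-(r:ℝ)| = ((b:ℝ) - (a:ℝ)) := by
    rcases le_total r t with h | h
    · have hc : (r:ℝ) ≤ (t:ℝ) := Nat.cast_le.2 h
      rw [hadef, hbdef, min_eq_left h, max_eq_right h,
        abs_of_nonneg (by linarith)]
    · have hc : (t:ℝ) ≤ (r:ℝ) := Nat.cast_le.2 h
      rw [hadef, hbdef, min_eq_right h, max_eq_left h,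
        abs_of_nonpos (by linarith)]
      ring
  set w : ℕ → ℝ := fun k => if k < a then q^(a-k) else if b < k then q^(k-b) else 1 with hwdef
  have key : ∀ k ∈ Finset.range n,
      Real.exp (-ψ₂ * |(r:ℝ)-(k:ℝ)|) * Real.exp (-ψ₁ * |(k:ℝ)-(t:ℝ)|)
        ≤ Real.exp (-m * ((b:ℝ)-(a:ℝ))) * w k := by
    intro k _
    rw [← Real.exp_add, hwdef]
    simp only
    split_ifs with hk1 hk2
    · rw [hqdef, ← Real.exp_nat_mul, ← Real.exp_add]
      apply Real.exp_le_exp.2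
      rw [Nat.cast_sub (le_of_lt hk1)]
      have e1 : |(r:ℝ)-(k:ℝ)| = (r:ℝ)-(k:ℝ) :=
        abs_of_nonneg (sub_nonneg.2 (Nat.cast_le.2 (by omega)))
      have e2 : |(k:ℝ)-(t:ℝ)| = (t:ℝ)-(k:ℝ) := by
        rw [abs_of_nonpos (sub_nonpos.2 (Nat.cast_le.2 (by omega)))]; ring
      rw [e1, e2]
      have f1 : (a:ℝ) ≤ (r:ℝ) := Nat.cast_le.2 har
      have f2 : (a:ℝ) ≤ (t:ℝ) := Nat.cast_le.2 hat
      have f3 : (a:ℝ) + (b:ℝ) = (r:ℝ) + (t:ℝ) := by exact_mod_cast habsum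
      nlinarith [mul_nonneg (sub_nonneg.2 hm2) (sub_nonneg.2 f1),
        mul_nonneg (sub_nonneg.2 hm1) (sub_nonneg.2 f2)]
    · rw [hqdef, ← Real.exp_nat_mul, ← Real.exp_add]
      apply Real.exp_le_exp.2
      rw [Nat.cast_sub (le_of_lt hk2)]
      have e1 : |(r:ℝ)-(k:ℝ)| = (k:ℝ)-(r:ℝ) := by
        rw [abs_of_nonpos (sub_nonpos.2 (Nat.cast_le.2 (by omega)))]; ring
      have e2 : |(k:ℝ)-(t:ℝ)| = (k:ℝ)-(t:ℝ) :=
        abs_of_nonneg (sub_nonneg.2 (Nat.cast_le.2 (by omega)))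
      rw [e1, e2]
      have f1 : (r:ℝ) ≤ (b:ℝ) := Nat.cast_le.2 hrb
      have f2 : (t:ℝ) ≤ (b:ℝ) := Nat.cast_le.2 htb
      have f3 : (a:ℝ) + (b:ℝ) = (r:ℝ) + (t:ℝ) := by exact_mod_cast habsum
      nlinarith [mul_nonneg (sub_nonneg.2 hm2) (sub_nonneg.2 f1),
        mul_nonneg (sub_nonneg.2 hm1) (sub_nonneg.2 f2)]
    · rw [mul_one]
      apply Real.exp_le_exp.2
      have tri : |(r:ℝ)-(t:ℝ)| ≤ |(r:ℝ)-(k:ℝ)| + |(k:ℝ)-(t:ℝ)| := abs_sub_le _ _ _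
      have hd : ((b:ℝ)-(a:ℝ)) ≤ |(r:ℝ)-(k:ℝ)| + |(k:ℝ)-(t:ℝ)| := by
        rw [← hdabs, abs_sub_comm]
        exact tri
      have x1 : 0 ≤ |(r:ℝ)-(k:ℝ)| := abs_nonneg _
      have x2 : 0 ≤ |(k:ℝ)-(t:ℝ)| := abs_nonneg _
      nlinarith [mul_nonneg (sub_nonneg.2 hm2) x1, mul_nonneg (sub_nonneg.2 hm1) x2]
  have hsw : ∑ k ∈ Finset.range n, w k ≤ ((b:ℝ)-(a:ℝ)) + 1 + 2*q/(1-q) := by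
    have hsplit : ∀ k, w k = (if k < a then q^(a-k) else 0)
        + ((if a ≤ k ∧ k ≤ b then 1 else 0) + (if b < k then q^(k-b) else 0)) := by
      intro k
      rw [hwdef]; simp only
      split_ifs <;> first | (exfalso; omega) | ring
    rw [Finset.sum_congr rfl (fun k _ => hsplit k), Finset.sum_add_distrib,
      Finset.sum_add_distrib]
    have hS1 : ∑ k ∈ Finset.range n, (if k < a then q^(a-k) else 0) ≤ q/(1-q) := by
      have hsub : Finset.range a ⊆ Finset.range n :=
        Finset.range_subset_range.2 (by omega)
      rw [← Finset.sum_subset hsub (fun x _ hx => by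
        rw [if_neg (by simp [Finset.mem_range] at hx; omega)])]
      rw [Finset.sum_congr rfl (fun k hk => if_pos (Finset.mem_range.1 hk))]
      rw [← Finset.sum_range_reflect (fun k => q^(a-k)) a]
      calc ∑ j ∈ Finset.range a, q^(a-(a-1-j))
          = ∑ j ∈ Finset.range a, q^(j+1) := by
            apply Finset.sum_congr rfl
            intro j hj
            congr 1
            have := Finset.mem_range.1 hj
            omega
        _ ≤ q/(1-q) := geom_tail q hq0 hq1 a
    have hS2 : ∑ k ∈ Finset.range n, (if a ≤ k ∧ k ≤ b then (1:ℝ) else 0)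
        ≤ ((b:ℝ)-(a:ℝ)) + 1 := by
      rw [← Finset.sum_filter]
      simp only [Finset.sum_const, nsmul_eq_mul, mul_one]
      have hcard : ((Finset.range n).filter (fun k => a ≤ k ∧ k ≤ b)).card ≤ b + 1 - a := by
        have : (Finset.range n).filter (fun k => a ≤ k ∧ k ≤ b) ⊆ Finset.Icc a b := by
          intro x hx
          simp [Finset.mem_filter, Finset.mem_range] at hx
          simp [Finset.mem_Icc]
          omega
        calc _ ≤ (Finset.Icc a b).card := Finset.card_le_card this
          _ = b + 1 - a := Nat.card_Icc a b
      calc (((Finset.range n).filter (fun k => a ≤ k ∧ k ≤ b)).card : ℝ)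
          ≤ ((b + 1 - a : ℕ) : ℝ) := Nat.cast_le.2 hcard
        _ = ((b:ℝ)-(a:ℝ)) + 1 := by
            rw [Nat.cast_sub (by omega)]
            push_cast; ring
    have hS3 : ∑ k ∈ Finset.range n, (if b < k then q^(k-b) else 0) ≤ q/(1-q) := by
      have hsub : Finset.Ico (b+1) n ⊆ Finset.range n := by
        intro x hx
        simp [Finset.mem_Ico] at hx
        simp [Finset.mem_range]
        omega
      rw [← Finset.sum_subset hsub (fun x hx hx2 => by
        rw [if_neg (by simp [Finset.mem_range] at hx; simp [Finset.mem_Ico] at hx2; omega)])]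
      rw [Finset.sum_congr rfl (fun k hk => if_pos (by
        have := Finset.mem_Ico.1 hk; omega))]
      rw [Finset.sum_Ico_eq_sum_range]
      calc ∑ j ∈ Finset.range (n-(b+1)), q^(b+1+j-b)
          = ∑ j ∈ Finset.range (n-(b+1)), q^(j+1) := by
            apply Finset.sum_congr rfl
            intro j _
            congr 1
            omega
        _ ≤ q/(1-q) := geom_tail q hq0 hq1 _
    have h2q : 2*q/(1-q) = q/(1-q) + q/(1-q) := by ring
    linarith
  calc ∑ k ∈ Finset.range n, Real.exp (-ψ₂ * |(r:ℝ)-(k:ℝ)|) * Real.exp (-ψ₁ * |(k:ℝ)-(t:ℝ)|)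
      ≤ ∑ k ∈ Finset.range n, Real.exp (-m * ((b:ℝ)-(a:ℝ))) * w k := Finset.sum_le_sum key
    _ = Real.exp (-m * ((b:ℝ)-(a:ℝ))) * ∑ k ∈ Finset.range n, w k := by
        rw [Finset.mul_sum]
    _ ≤ Real.exp (-m * ((b:ℝ)-(a:ℝ))) * (((b:ℝ)-(a:ℝ)) + 1 + 2*q/(1-q)) := by
        apply mul_le_mul_of_nonneg_left hsw (le_of_lt (Real.exp_pos _))
    _ = (|(t:ℝ)-(r:ℝ)| + 1 + 2*q/(1-q)) * Real.exp (-m * |(t:ℝ)-(r:ℝ)|) := by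
        rw [hdabs]; ring

end Aux

/-- Exponential (log-linear) off-diagonal decay, at rate min ψ₁ ψ₂, of the
inverse of a product of two tridiagonal Toeplitz matrices. -/
theorem stmt_5 (n : ℕ) (hn : 1 ≤ n) (lam π₁ π₂ : ℝ)
    (hlam₁ : 0 < 2 * lam) (hπ₁ : 2 * lam < π₁) (hπ₂ : 2 * lam < π₂)
    (ψ₁ ψ₂ : ℝ) (hψ₁ : ψ₁ = _root_.arcosh (π₁ / (2 * lam)))
    (hψ₂ : ψ₂ = _root_.arcosh (π₂ / (2 * lam)))
    (Z₁ Z₂ P : Matrix (Fin n) (Fin n) ℝ)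
    (hZ₁ : ∀ i j : Fin n,
      Z₁ i j =
        if (i : ℕ) = (j : ℕ) then π₁
        else if ((i : ℤ) - (j : ℤ)).natAbs = 1 then lam
        else 0)
    (hZ₂ : ∀ i j : Fin n,
      Z₂ i j =
        if (i : ℕ) = (j : ℕ) then π₂
        else if ((i : ℤ) - (j : ℤ)).natAbs = 1 then lam
        else 0)
    (hP : P = Z₁ * Z₂) :
    IsUnit P ∧
      ∀ r t : Fin n,
        |P⁻¹ r t| ≤
          (1 / (4 * lam ^ 2 * Real.sinh ψ₁ * Real.sinh ψ₂ *
              (1 - Real.exp (-2 * ψ₁ * ((n : ℝ) + 1))) *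
              (1 - Real.exp (-2 * ψ₂ * ((n : ℝ) + 1))))) *
            (|((t : ℕ) : ℝ) - ((r : ℕ) : ℝ)| + 1 +
              2 * Real.exp (-(ψ₁ + ψ₂)) / (1 - Real.exp (-(ψ₁ + ψ₂)))) *
            Real.exp (-(min ψ₁ ψ₂) * |((t : ℕ) : ℝ) - ((r : ℕ) : ℝ)|) := by
  have hlam : 0 < lam := by linarith
  have hx₁ : 1 < π₁/(2*lam) := (one_lt_div hlam₁).2 hπ₁
  have hx₂ : 1 < π₂/(2*lam) := (one_lt_div hlam₁).2 hπ₂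
  have h₁ := arcosh_facts' _ hx₁
  have h₂ := arcosh_facts' _ hx₂
  rw [← hψ₁] at h₁
  rw [← hψ₂] at h₂
  obtain ⟨hψ₁pos, hcosh₁⟩ := h₁
  obtain ⟨hψ₂pos, hcosh₂⟩ := h₂
  have hπ₁' : π₁ = 2*lam*Real.cosh ψ₁ := by
    field_simp at hcosh₁; linarith
  have hπ₂' : π₂ = 2*lam*Real.cosh ψ₂ := by
    field_simp at hcosh₂; linarith
  -- the explicit inverses
  have key : ∀ (p ψ : ℝ), 0 < ψ → p = 2*lam*Real.cosh ψ →
      ∀ Z : Matrix (Fin n) (Fin n) ℝ,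
      (∀ i j : Fin n, Z i j = if (i : ℕ) = (j : ℕ) then p
        else if ((i : ℤ) - (j : ℤ)).natAbs = 1 then lam else 0) →
      Z * (Matrix.of fun i j : Fin n => Mt n lam ψ ((i:ℕ):ℤ) ((j:ℕ):ℤ)) = 1 := by
    intro p ψ hψ hp Z hZ
    ext i j
    rw [Matrix.mul_apply, Matrix.one_apply]
    have hfm : Mt n lam ψ (-1) ((j:ℕ):ℤ) = 0 :=
      Mt_left_zero n lam ψ _ (by have := Int.ofNat_nonneg (j:ℕ); omega)
    have hfn : Mt n lam ψ ((n:ℕ):ℤ) ((j:ℕ):ℤ) = 0 :=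
      Mt_right_zero n lam ψ _ (by exact_mod_cast le_of_lt j.isLt)
    have hiff : (((i:ℕ):ℤ) = ((j:ℕ):ℤ)) ↔ i = j := by
      constructor
      · intro h; exact Fin.ext (by exact_mod_cast h)
      · intro h; rw [h]
    calc ∑ k : Fin n, Z i k * Matrix.of (fun i j : Fin n => Mt n lam ψ ((i:ℕ):ℤ) ((j:ℕ):ℤ)) k j
        = ∑ k : Fin n, (fun m : ℕ => (if (i:ℕ) = m then p
            else if (((i:ℕ):ℤ)-((m:ℕ):ℤ)).natAbs = 1 then lam else 0)
              * Mt n lam ψ ((m:ℕ):ℤ) ((j:ℕ):ℤ)) (k:ℕ) := by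
          apply Finset.sum_congr rfl
          intro k _
          rw [hZ, Matrix.of_apply]
      _ = ∑ m ∈ Finset.range n, (if (i:ℕ) = m then p
            else if (((i:ℕ):ℤ)-((m:ℕ):ℤ)).natAbs = 1 then lam else 0)
              * Mt n lam ψ ((m:ℕ):ℤ) ((j:ℕ):ℤ) :=
          Fin.sum_univ_eq_sum_range (fun m : ℕ => (if (i:ℕ) = m then p
            else if (((i:ℕ):ℤ)-((m:ℕ):ℤ)).natAbs = 1 then lam else 0)
              * Mt n lam ψ ((m:ℕ):ℤ) ((j:ℕ):ℤ)) n
      _ = lam * Mt n lam ψ (((i:ℕ):ℤ)-1) ((j:ℕ):ℤ) + p * Mt n lam ψ ((i:ℕ):ℤ) ((j:ℕ):ℤ)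
            + lam * Mt n lam ψ (((i:ℕ):ℤ)+1) ((j:ℕ):ℤ) :=
          row_sum n p lam (fun z => Mt n lam ψ z ((j:ℕ):ℤ)) hfm hfn (i:ℕ) i.isLt
      _ = if i = j then 1 else 0 := by
          rw [hp, main_id n lam ψ hlam hψ ((i:ℕ):ℤ) ((j:ℕ):ℤ)
            (Int.ofNat_nonneg _) (by exact_mod_cast j.isLt), if_congr hiff rfl rfl]
  have hZ₁M : Z₁ * (Matrix.of fun i j : Fin n => Mt n lam ψ₁ ((i:ℕ):ℤ) ((j:ℕ):ℤ)) = 1 :=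
    key π₁ ψ₁ hψ₁pos hπ₁' Z₁ hZ₁
  have hZ₂M : Z₂ * (Matrix.of fun i j : Fin n => Mt n lam ψ₂ ((i:ℕ):ℤ) ((j:ℕ):ℤ)) = 1 :=
    key π₂ ψ₂ hψ₂pos hπ₂' Z₂ hZ₂
  -- symmetry gives left inverses
  have hsymZ : ∀ (p : ℝ) (Z : Matrix (Fin n) (Fin n) ℝ),
      (∀ i j : Fin n, Z i j = if (i : ℕ) = (j : ℕ) then p
        else if ((i : ℤ) - (j : ℤ)).natAbs = 1 then lam else 0) → Zᵀ = Z := by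
    intro p Z hZ
    ext i j
    rw [Matrix.transpose_apply, hZ i j, hZ j i]
    split_ifs <;> first | rfl | (exfalso; omega)
  have hsymM : ∀ ψ : ℝ,
      (Matrix.of fun i j : Fin n => Mt n lam ψ ((i:ℕ):ℤ) ((j:ℕ):ℤ))ᵀ
        = (Matrix.of fun i j : Fin n => Mt n lam ψ ((i:ℕ):ℤ) ((j:ℕ):ℤ)) := by
    intro ψ
    ext i j
    rw [Matrix.transpose_apply, Matrix.of_apply, Matrix.of_apply]
    exact Mt_symm n lam ψ _ _
  have hMZ₁ : (Matrix.of fun i j : Fin n => Mt n lam ψ₁ ((i:ℕ):ℤ) ((j:ℕ):ℤ)) * Z₁ = 1 := by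
    have h := congrArg Matrix.transpose hZ₁M
    rwa [Matrix.transpose_mul, hsymZ π₁ Z₁ hZ₁, hsymM ψ₁, Matrix.transpose_one] at h
  have hMZ₂ : (Matrix.of fun i j : Fin n => Mt n lam ψ₂ ((i:ℕ):ℤ) ((j:ℕ):ℤ)) * Z₂ = 1 := by
    have h := congrArg Matrix.transpose hZ₂M
    rwa [Matrix.transpose_mul, hsymZ π₂ Z₂ hZ₂, hsymM ψ₂, Matrix.transpose_one] at h
  have hleft : ((Matrix.of fun i j : Fin n => Mt n lam ψ₂ ((i:ℕ):ℤ) ((j:ℕ):ℤ))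
      * (Matrix.of fun i j : Fin n => Mt n lam ψ₁ ((i:ℕ):ℤ) ((j:ℕ):ℤ))) * P = 1 := by
    rw [hP, Matrix.mul_assoc, ← Matrix.mul_assoc _ Z₁ Z₂, hMZ₁, Matrix.one_mul, hMZ₂]
  have hunit : IsUnit P :=
    (Matrix.isUnit_iff_isUnit_det P).2 (Matrix.isUnit_det_of_left_inverse hleft)
  have hPinv : P⁻¹ = (Matrix.of fun i j : Fin n => Mt n lam ψ₂ ((i:ℕ):ℤ) ((j:ℕ):ℤ))
      * (Matrix.of fun i j : Fin n => Mt n lam ψ₁ ((i:ℕ):ℤ) ((j:ℕ):ℤ)) :=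
    Matrix.inv_eq_left_inv hleft
  refine ⟨hunit, fun r t => ?_⟩
  have hB₁pos : 0 < 2*lam*Real.sinh ψ₁*(1 - Real.exp (-2*ψ₁*((n:ℝ)+1))) := by
    have := one_sub_exp_pos n ψ₁ hψ₁pos
    have := Real.sinh_pos_iff.2 hψ₁pos
    positivity
  have hB₂pos : 0 < 2*lam*Real.sinh ψ₂*(1 - Real.exp (-2*ψ₂*((n:ℝ)+1))) := by
    have := one_sub_exp_pos n ψ₂ hψ₂pos
    have := Real.sinh_pos_iff.2 hψ₂pos
    positivity
  rw [hPinv, Matrix.mul_apply]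
  calc |∑ k : Fin n, Matrix.of (fun i j : Fin n => Mt n lam ψ₂ ((i:ℕ):ℤ) ((j:ℕ):ℤ)) r k
        * Matrix.of (fun i j : Fin n => Mt n lam ψ₁ ((i:ℕ):ℤ) ((j:ℕ):ℤ)) k t|
      ≤ ∑ k : Fin n, |Matrix.of (fun i j : Fin n => Mt n lam ψ₂ ((i:ℕ):ℤ) ((j:ℕ):ℤ)) r k
        * Matrix.of (fun i j : Fin n => Mt n lam ψ₁ ((i:ℕ):ℤ) ((j:ℕ):ℤ)) k t| :=
        Finset.abs_sum_le_sum_abs _ _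
    _ ≤ ∑ k : Fin n, (fun m : ℕ =>
          (1/((2*lam*Real.sinh ψ₂*(1 - Real.exp (-2*ψ₂*((n:ℝ)+1))))
            * (2*lam*Real.sinh ψ₁*(1 - Real.exp (-2*ψ₁*((n:ℝ)+1))))))
          * (Real.exp (-ψ₂ * |((r:ℕ):ℝ)-((m:ℕ):ℝ)|)
            * Real.exp (-ψ₁ * |((m:ℕ):ℝ)-((t:ℕ):ℝ)|))) (k:ℕ) := by
        apply Finset.sum_le_sum
        intro k _
        rw [Matrix.of_apply, Matrix.of_apply, abs_mul]
        have h2 := Mt_bound n lam ψ₂ hlam hψ₂pos (r:ℕ) (k:ℕ) r.isLt k.isLt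
        have h1 := Mt_bound n lam ψ₁ hlam hψ₁pos (k:ℕ) (t:ℕ) k.isLt t.isLt
        calc |Mt n lam ψ₂ ((r:ℕ):ℤ) ((k:ℕ):ℤ)| * |Mt n lam ψ₁ ((k:ℕ):ℤ) ((t:ℕ):ℤ)|
            ≤ (Real.exp (-ψ₂ * |((r:ℕ):ℝ)-((k:ℕ):ℝ)|)
                / (2*lam*Real.sinh ψ₂*(1 - Real.exp (-2*ψ₂*((n:ℝ)+1)))))
              * (Real.exp (-ψ₁ * |((k:ℕ):ℝ)-((t:ℕ):ℝ)|)
                / (2*lam*Real.sinh ψ₁*(1 - Real.exp (-2*ψ₁*((n:ℝ)+1))))) :=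
              mul_le_mul h2 h1 (abs_nonneg _) (by positivity)
          _ = _ := by field_simp
    _ = (1/((2*lam*Real.sinh ψ₂*(1 - Real.exp (-2*ψ₂*((n:ℝ)+1))))
            * (2*lam*Real.sinh ψ₁*(1 - Real.exp (-2*ψ₁*((n:ℝ)+1))))))
          * ∑ m ∈ Finset.range n, Real.exp (-ψ₂ * |((r:ℕ):ℝ)-((m:ℕ):ℝ)|)
            * Real.exp (-ψ₁ * |((m:ℕ):ℝ)-((t:ℕ):ℝ)|) := by
        rw [Fin.sum_univ_eq_sum_range (fun m : ℕ =>
          (1/((2*lam*Real.sinh ψ₂*(1 - Real.exp (-2*ψ₂*((n:ℝ)+1))))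
            * (2*lam*Real.sinh ψ₁*(1 - Real.exp (-2*ψ₁*((n:ℝ)+1))))))
          * (Real.exp (-ψ₂ * |((r:ℕ):ℝ)-((m:ℕ):ℝ)|)
            * Real.exp (-ψ₁ * |((m:ℕ):ℝ)-((t:ℕ):ℝ)|))) n, ← Finset.mul_sum]
    _ ≤ (1/((2*lam*Real.sinh ψ₂*(1 - Real.exp (-2*ψ₂*((n:ℝ)+1))))
            * (2*lam*Real.sinh ψ₁*(1 - Real.exp (-2*ψ₁*((n:ℝ)+1))))))
          * ((|((t:ℕ):ℝ)-((r:ℕ):ℝ)| + 1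
              + 2 * Real.exp (-(ψ₁+ψ₂)) / (1 - Real.exp (-(ψ₁+ψ₂))))
            * Real.exp (-(min ψ₁ ψ₂) * |((t:ℕ):ℝ)-((r:ℕ):ℝ)|)) := by
        apply mul_le_mul_of_nonneg_left
          (conv_bound n ψ₁ ψ₂ hψ₁pos hψ₂pos (r:ℕ) (t:ℕ) r.isLt t.isLt)
          (by positivity)
    _ = (1 / (4 * lam ^ 2 * Real.sinh ψ₁ * Real.sinh ψ₂ *
              (1 - Real.exp (-2 * ψ₁ * ((n : ℝ) + 1))) *
              (1 - Real.exp (-2 * ψ₂ * ((n : ℝ) + 1))))) *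
            (|((t : ℕ) : ℝ) - ((r : ℕ) : ℝ)| + 1 +
              2 * Real.exp (-(ψ₁ + ψ₂)) / (1 - Real.exp (-(ψ₁ + ψ₂)))) *
            Real.exp (-(min ψ₁ ψ₂) * |((t : ℕ) : ℝ) - ((r : ℕ) : ℝ)|) := by
        rw [show (2*lam*Real.sinh ψ₂*(1 - Real.exp (-2*ψ₂*((n:ℝ)+1))))
            * (2*lam*Real.sinh ψ₁*(1 - Real.exp (-2*ψ₁*((n:ℝ)+1))))
          = 4 * lam ^ 2 * Real.sinh ψ₁ * Real.sinh ψ₂ *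
              (1 - Real.exp (-2 * ψ₁ * ((n : ℝ) + 1))) *
              (1 - Real.exp (-2 * ψ₂ * ((n : ℝ) + 1))) by ring]
        ring
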